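/- With Ω, f, u as above, the function G(z) = u(z) + log|z| is the Green's function of Ω with pole at 0; that is, G is harmonic on Ω \ {0}, G(z) + log|z| is harmonic near 0 (i.e., G(z) = −log|z| + harmonic), G > 0 on Ω \ {0}, and G extends continuously to 0 on the boundary. -/

import Mathlib

open Complex Metric Set

/-- A real function is harmonic on an (open) set if near each point it is the real
part of a holomorphic function. -/
def HarmonicOn (u : ℂ → ℝ) (s : Set ℂ) : Prop :=
  ∀ z ∈ s, ∃ r > 0, Metric.ball z r ⊆ s ∧ ∃ F : ℂ → ℂ,
    DifferentiableOn ℂ F (Metric.ball z r) ∧ ∀ w ∈ Metric.ball z r, u w = (F w).re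

lemma harmonicOn_neg_log_abs (s : Set ℂ) (hs : IsOpen s) (g : ℂ → ℂ)
    (hg : DifferentiableOn ℂ g s) (hne : ∀ z ∈ s, g z ≠ 0)
    (u : ℂ → ℝ) (hu : ∀ z ∈ s, u z = -Real.log (‖g z‖)) :
    HarmonicOn u s := by
  intro z hz
  have hgz := hne z hz
  have hcont : ContinuousAt (fun w => g w / g z) z :=
    ((hg.differentiableAt (hs.mem_nhds hz)).continuousAt).div_const _
  have h1 : {w : ℂ | ‖g w / g z - 1‖ < 1} ∈ nhds z := by
    have ht : Filter.Tendsto (fun w => g w / g z) (nhds z) (nhds 1) := by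
      simpa [div_self hgz] using hcont.tendsto
    have := ht (Metric.ball_mem_nhds (1:ℂ) one_pos)
    filter_upwards [this] with w hw
    simpa [Complex.dist_eq] using hw
  obtain ⟨r, hr0, hball⟩ :=
    Metric.mem_nhds_iff.mp (Filter.inter_mem (hs.mem_nhds hz) h1)
  refine ⟨r, hr0, fun w hw => (hball hw).1,
    fun w => -Complex.log (g w / g z) + (u z : ℂ), ?_, ?_⟩
  · intro w hw
    obtain ⟨hws, habs⟩ := hball hw
    have hpos : 0 < (g w / g z).re := by
      have h2 : |(g w / g z - 1).re| ≤ ‖g w / g z - 1‖ :=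
        Complex.abs_re_le_norm _
      have h3 : ‖g w / g z - 1‖ < 1 := habs
      have h4 : (g w / g z - 1).re = (g w / g z).re - 1 := by simp
      have h5 : -(1:ℝ) < (g w / g z - 1).re := by
        have := (abs_lt.mp (h2.trans_lt h3)).1
        linarith
      linarith
    have hlog : DifferentiableAt ℂ Complex.log (g w / g z) :=
      Complex.differentiableAt_log (Complex.mem_slitPlane_iff.mpr (Or.inl hpos))
    have hdw : DifferentiableAt ℂ (fun w => g w / g z) w :=
      (hg.differentiableAt (hs.mem_nhds hws)).div_const _
    exact ((hlog.comp w hdw).neg.add_const _).differentiableWithinAt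
  · intro w hw
    obtain ⟨hws, _⟩ := hball hw
    have hgw := hne w hws
    rw [hu w hws]
    have : (Complex.log (g w / g z)).re =
        Real.log (‖g w‖) - Real.log (‖g z‖) := by
      rw [Complex.log_re, norm_div, Real.log_div (by simpa using hgw) (by simpa using hgz)]
    simp only [Complex.add_re, Complex.neg_re, this, Complex.ofReal_re, hu z hz]
    ring

/-- For the normalized Riemann map `f` of a bounded Jordan domain
`Ω ∋ 0` (so `G z = u z + log|z| = -log |f z|`), `G` is the Green's function of `Ω`
with pole at `0`: `G` is harmonic on `Ω \ {0}`, `G z + log|z|` is harmonic near `0`,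
`G > 0` on `Ω \ {0}`, and `G` extends continuously to `0` on the boundary. -/
theorem stmt2 (Ω : Set ℂ) (hΩopen : IsOpen Ω) (hΩbdd : Bornology.IsBounded Ω)
    (hΩ0 : (0:ℂ) ∈ Ω)
    (hJordan : ∃ γ : Metric.sphere (0:ℂ) 1 → ℂ, Continuous γ ∧
      Function.Injective γ ∧ Set.range γ = frontier Ω)
    (f : ℂ → ℂ) (hf : DifferentiableOn ℂ f Ω)
    (hbij : Set.BijOn f Ω (ball (0:ℂ) 1))
    (hf0 : f 0 = 0) (hderiv : (deriv f 0).im = 0 ∧ 0 < (deriv f 0).re)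
    (hext : ContinuousOn f (closure Ω) ∧ ∀ z ∈ frontier Ω, ‖f z‖ = 1)
    (G : ℂ → ℝ) (hG : ∀ z ∈ closure Ω, G z = -Real.log (‖f z‖)) :
    HarmonicOn G (Ω \ {0}) ∧
    (∃ r > 0, Metric.ball (0:ℂ) r ⊆ Ω ∧
      HarmonicOn (fun z => G z + Real.log (‖z‖)) (Metric.ball (0:ℂ) r \ {0}) ∧
      ∃ h : ℂ → ℝ, HarmonicOn h (Metric.ball (0:ℂ) r) ∧
        ∀ z ∈ Metric.ball (0:ℂ) r \ {0}, G z = -Real.log (‖z‖) + h z) ∧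
    (∀ z ∈ Ω \ {0}, 0 < G z) ∧
    (∀ z ∈ frontier Ω, Filter.Tendsto G (nhdsWithin z Ω) (nhds 0)) := by
  have hinj := hbij.injOn
  have hfne : ∀ z ∈ Ω, z ≠ 0 → f z ≠ 0 := by
    intro z hz hz0 h0
    exact hz0 (hinj hz hΩ0 (h0.trans hf0.symm))
  obtain ⟨r, hr0, hball⟩ := Metric.isOpen_iff.mp hΩopen 0 hΩ0
  set g : ℂ → ℂ := dslope f 0 with hgdef
  have hgdiff : DifferentiableOn ℂ g (ball 0 r) :=
    (Complex.differentiableOn_dslope (Metric.ball_mem_nhds 0 hr0)).mpr (hf.mono hball)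
  have hg0 : g 0 = deriv f 0 := dslope_same f 0
  have hgne : ∀ w ∈ ball (0:ℂ) r, g w ≠ 0 := by
    intro w hw
    rcases eq_or_ne w 0 with rfl | hw0
    · rw [hg0]
      intro h
      rw [h] at hderiv
      simpa using hderiv.2
    · rw [hgdef, dslope_of_ne f hw0, slope_def_field, hf0]
      simp only [sub_zero]
      exact div_ne_zero (hfne w (hball hw) hw0) hw0
  have hgval : ∀ w : ℂ, w ≠ 0 → g w = f w / w := by
    intro w hw0
    rw [hgdef, dslope_of_ne f hw0, slope_def_field, hf0, sub_zero, sub_zero]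
  have key : ∀ z : ℂ, z ∈ Ω → z ≠ 0 →
      G z = -Real.log (‖z‖) + -Real.log (‖g z‖) := by
    intro z hz hz0
    rw [hG z (subset_closure hz), hgval z hz0, norm_div,
      Real.log_div (by simpa using hfne z hz hz0) (by simpa using hz0)]
    ring
  refine ⟨?_, ⟨r, hr0, hball, ?_, fun z => -Real.log (‖g z‖), ?_, ?_⟩, ?_, ?_⟩
  · exact harmonicOn_neg_log_abs _ (hΩopen.sdiff isClosed_singleton) f
      (hf.mono diff_subset) (fun z hz => hfne z hz.1 hz.2)
      G (fun z hz => hG z (subset_closure hz.1))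
  · refine harmonicOn_neg_log_abs _ (isOpen_ball.sdiff isClosed_singleton) g
      (hgdiff.mono diff_subset) (fun z hz => hgne z hz.1) _ ?_
    intro z hz
    have := key z (hball hz.1) hz.2
    simp only [this]
    ring
  · exact harmonicOn_neg_log_abs _ isOpen_ball g hgdiff hgne _ (fun z hz => rfl)
  · intro z hz
    exact key z (hball hz.1) hz.2
  · rintro z ⟨hz, hz0⟩
    rw [hG z (subset_closure hz)]
    have h1 : f z ∈ ball (0:ℂ) 1 := hbij.mapsTo hz
    have h2 : ‖f z‖ < 1 := by simpa [Complex.dist_eq] using h1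
    have h3 : 0 < ‖f z‖ := by
      simpa using hfne z hz hz0
    exact neg_pos.mpr (Real.log_neg h3 h2)
  · intro z hz
    have hzc : z ∈ closure Ω := frontier_subset_closure hz
    have hfc : Filter.Tendsto f (nhdsWithin z Ω) (nhds (f z)) :=
      ((hext.1 z hzc).mono subset_closure).tendsto
    have habs : Filter.Tendsto (fun w => ‖f w‖) (nhdsWithin z Ω) (nhds 1) := by
      have := (continuous_norm.tendsto (f z)).comp hfc
      rwa [hext.2 z hz] at this
    have hlog : Filter.Tendsto (fun w => -Real.log (‖f w‖))
        (nhdsWithin z Ω) (nhds 0) := by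
      have := ((Real.continuousAt_log one_ne_zero).tendsto.comp habs).neg
      simpa using this
    refine hlog.congr' ?_
    filter_upwards [eventually_mem_nhdsWithin] with w hw
    exact (hG w (subset_closure hw)).symm
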